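/- Let P_u be a u-t path and let v be a neighbor of u not incident to P_u. Then the path P_v = P_u ∪ {vu} satisfies Val(P_v) = max{ℓ(vu) + Val(P_u), s_v^{-vu}}. -/

import Mathlib

open scoped ENNReal

noncomputable section

/-- The length of a walk w.r.t. edge weights `ℓ`. -/
def wlen {V : Type*} {G : SimpleGraph V} (ℓ : Sym2 V → ℝ≥0∞) {u v : V} (p : G.Walk u v) : ℝ≥0∞ :=
  (p.edges.map ℓ).sum

/-- Weighted shortest-path distance in `G`. -/
def wdist {V : Type*} (G : SimpleGraph V) (ℓ : Sym2 V → ℝ≥0∞) (u v : V) : ℝ≥0∞ :=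
  ⨅ p : G.Walk u v, wlen ℓ p

/-- `s_u^{-e}`: the shortest `u`-`t` distance in `G` with edge `e` removed. -/
def sval {V : Type*} (G : SimpleGraph V) (ℓ : Sym2 V → ℝ≥0∞) (t : V) (e : Sym2 V) (u : V) :
    ℝ≥0∞ :=
  wdist (G.deleteEdges {e}) ℓ u t

/-- The supremum, over edges `uu'` of the walk (u nearer the start), of
`ℓ(P[v,u]) + s_u^{-uu'}`. -/
def detourSup {V : Type*} (G : SimpleGraph V) (ℓ : Sym2 V → ℝ≥0∞) (t : V) :
    ∀ {v : V}, G.Walk v t → ℝ≥0∞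
  | _, SimpleGraph.Walk.nil => 0
  | v, @SimpleGraph.Walk.cons _ _ _ w _ _h p =>
      max (sval G ℓ t s(v, w) v) (ℓ s(v, w) + detourSup G ℓ t p)

/-- The robust length `Val(P)` of a `v`-`t` walk `P`. -/
def rVal {V : Type*} (G : SimpleGraph V) (ℓ : Sym2 V → ℝ≥0∞) (t : V) {v : V}
    (p : G.Walk v t) : ℝ≥0∞ :=
  max (wlen ℓ p) (detourSup G ℓ t p)

/-- The potential `y(v)`: minimum robust length over all simple `v`-`t` paths. -/
def pot {V : Type*} (G : SimpleGraph V) (ℓ : Sym2 V → ℝ≥0∞) (t v : V) : ℝ≥0∞ :=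
  ⨅ p : {p : G.Walk v t // p.IsPath}, rVal G ℓ t p.1

/-- Let `P_u` be a `u`-`t` path and `v` a neighbor of `u` not incident
to `P_u`. Then `P_v = P_u ∪ {vu}` satisfies
`Val(P_v) = max{ℓ(vu) + Val(P_u), s_v^{-vu}}`. -/
theorem robust_length_cons {V : Type*} [Fintype V] [DecidableEq V]
    (G : SimpleGraph V) (ℓ : Sym2 V → ℝ≥0∞) (t u v : V)
    (Pu : G.Walk u t) (hPu : Pu.IsPath) (h : G.Adj v u) (hv : v ∉ Pu.support) :
    rVal G ℓ t (SimpleGraph.Walk.cons h Pu) =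
      max (ℓ s(v, u) + rVal G ℓ t Pu) (sval G ℓ t s(v, u) v) := by
  have hadd : ∀ a b c : ℝ≥0∞, a + max b c = max (a + b) (a + c) := by
    intro a b c
    rcases le_total b c with hbc | hbc
    · rw [max_eq_right hbc, max_eq_right (by exact add_le_add le_rfl hbc)]
    · rw [max_eq_left hbc, max_eq_left (by exact add_le_add le_rfl hbc)]
  simp only [rVal, wlen, detourSup, SimpleGraph.Walk.edges_cons, List.map_cons, List.sum_cons,
    hadd]
  rw [max_comm (sval G ℓ t s(v, u) v), max_assoc]
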